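/- For a tree-like multiset t over F and any f in the support of flat_F(t), there is a unique multiset ingredient of t (where t itself counts as an ingredient) that is a tree-like multiset whose root is f. -/

import Mathlib

namespace CFDPaper

noncomputable section

attribute [local instance] Classical.decEq
attribute [local instance] Classical.propDecidable

/-- Depth-indexed hereditary finite multisets: `HMd A n` models the class `M_{n+1}(A)`
of the cumulative hierarchy of finite multisets over the urelements `A`. -/
@[reducible] def HMd (A : Type) : ℕ → Type
  | 0 => Multiset A
  | n + 1 => Multiset (A ⊕ HMd A n)

variable {A B F : Type}

instance instAddHMd (A : Type) (n : ℕ) : Add (HMd A n) :=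
  match n with
  | 0 => inferInstanceAs (Add (Multiset A))
  | n + 1 => inferInstanceAs (Add (Multiset (A ⊕ HMd A n)))

/-- The canonical inclusion `M_{n+1}(A) ⊆ M_{n+2}(A)`. -/
def HMd.up : ∀ n : ℕ, HMd A n → HMd A (n + 1)
  | 0, m => ((m : Multiset A).map (Sum.inl : A → A ⊕ HMd A 0) : Multiset (A ⊕ HMd A 0))
  | n + 1, m => ((m : Multiset (A ⊕ HMd A n)).map (Sum.map id (HMd.up n)) :
      Multiset (A ⊕ HMd A (n + 1)))

/-- Iterated inclusion along `k ≤ n`. -/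
def HMd.liftLe {k n : ℕ} (h : k ≤ n) (m : HMd A k) : HMd A n :=
  Nat.leRecOn h (fun {i} x => HMd.up i x) m

/-- `m` (living at some level of the hierarchy) already appears at level `r`. -/
def comesFrom (r : ℕ) (m : Σ n, HMd A n) : Prop :=
  ∃ (h : r ≤ m.1) (x : HMd A r), HMd.liftLe h x = m.2

/-- The rank of a hereditary multiset: least level of the hierarchy where it occurs
(`rank m = r` corresponds to paper-rank `r + 1`). -/
def rank (m : Σ n, HMd A n) : ℕ := sInf {r | comesFrom r m}

/-- Equality of hereditary multisets living at different levels, via lifting. -/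
def hmEq {k n : ℕ} (x : HMd A k) (y : HMd A n) : Prop :=
  HMd.liftLe (le_max_left k n) x = HMd.liftLe (le_max_right k n) y

/-- Membership of a multiset in the domain (support) of a higher-level multiset. -/
def HMd.Memb {n : ℕ} (x : HMd A n) (m : HMd A (n + 1)) : Prop :=
  Sum.inr x ∈ (m : Multiset (A ⊕ HMd A n))

/-- The flattening function: flat multiplicity of each urelement. -/
def HMd.flat : ∀ {n : ℕ}, HMd A n → Multiset A
  | 0, m => (m : Multiset A)
  | n + 1, m => (m : Multiset (A ⊕ HMd A n)).bind fun e =>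
      match e with
      | Sum.inl a => {a}
      | Sum.inr x => HMd.flat (n := n) x

/-- Top-level multiplicity of an urelement. -/
def HMd.acount : ∀ {n : ℕ}, F → HMd F n → ℕ
  | 0, f, m => (m : Multiset F).count f
  | _ + 1, f, m => (m : Multiset _).count (Sum.inl f)

/-- The multiset-ingredient relation (transitive closure of domain membership). -/
inductive Ingr (A : Type) : ∀ {k n : ℕ}, HMd A k → HMd A n → Prop
  | mem {n : ℕ} {x : HMd A n} {m : HMd A (n + 1)} : x.Memb m → Ingr A x m
  | tail {k n : ℕ} {x : HMd A k} {y : HMd A n} {m : HMd A (n + 1)} :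
      Ingr A x y → y.Memb m → Ingr A x m

/-- Disjointness of flattened domains. -/
def FDisj {k n : ℕ} (x : HMd A k) (y : HMd A n) : Prop :=
  ∀ a, a ∈ x.flat → a ∉ y.flat

/-- The singleton multiset `⌈f⌉` at each level. -/
def HMd.single : ∀ n : ℕ, A → HMd A n
  | 0, f => ({f} : Multiset A)
  | _ + 1, f => ({Sum.inl f} : Multiset _)

/-- `⌈xᶜ⌉` : the multiset containing `x` with multiplicity `c`. -/
def HMd.rep {n : ℕ} (c : ℕ) (x : HMd A n) : HMd A (n + 1) :=
  (Multiset.replicate c (Sum.inr x) : Multiset (A ⊕ HMd A n))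

/-- `⌈t₁^{n₁}, …, t_k^{n_k}⌉` built from a list of tree-multiplicity pairs. -/
def HMd.ofList {n : ℕ} (l : List (HMd A n × ℕ)) : HMd A (n + 1) :=
  ((l.map fun p => Multiset.replicate p.2 (Sum.inr p.1 : A ⊕ HMd A n)).sum :
    Multiset (A ⊕ HMd A n))

/-- A "group" multiset: one whose domain contains no urelements. -/
def HMd.NoAtoms {n : ℕ} (g : HMd A (n + 1)) : Prop :=
  ∀ a : A, Sum.inl a ∉ (g : Multiset (A ⊕ HMd A n))

/-- Tree-like multisets over `F` (Definition: singleton, solitary-extension,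
group-extension; closed under the cumulative inclusions). -/
inductive TreeLike (F : Type) : ∀ n : ℕ, HMd F n → Prop
  | sing (n : ℕ) (f : F) : TreeLike F n (HMd.single n f)
  | up {n : ℕ} {t : HMd F n} : TreeLike F n t → TreeLike F (n + 1) (HMd.up n t)
  | sol {n : ℕ} {t₁ : HMd F (n + 1)} {t₂ : HMd F n} (c : ℕ) :
      TreeLike F (n + 1) t₁ → TreeLike F n t₂ → FDisj t₁ t₂ →
      TreeLike F (n + 1) (t₁ + HMd.rep c t₂)
  | grp {n : ℕ} {t : HMd F (n + 1)} (l : List (HMd F n × ℕ)) :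
      TreeLike F (n + 1) t →
      (∀ p ∈ l, TreeLike F n p.1) →
      (∀ p ∈ l, FDisj t p.1) →
      l.Pairwise (fun p q => FDisj p.1 q.1) →
      TreeLike F (n + 2) (HMd.up (n + 1) t + HMd.rep 1 (HMd.ofList l))

/-- `x` is an ingredient of `t`, or `t` itself. -/
def IngrE {k n : ℕ} (x : HMd A k) (t : HMd A n) : Prop :=
  Ingr A x t ∨ hmEq x t

/-- `x` occurs (up to lifting) in the domain of `m`. -/
def MemUpTo {k n : ℕ} (x : HMd A k) (m : HMd A (n + 1)) : Prop :=
  ∃ y : HMd A n, HMd.Memb y m ∧ hmEq x y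

/-- `x` is the tree-like ingredient of `t` induced by (i.e. with root) `f`. -/
def RootedIngr {n : ℕ} (t : HMd F n) (f : F) {k : ℕ} (x : HMd F k) : Prop :=
  IngrE x t ∧ TreeLike F k x ∧ 0 < HMd.acount f x

/-- `p` is the parent of `f` in the tree-like multiset `t`: the induced multiset of `f`
lies in the domain of the multiset induced by `p`, directly or inside a group ingredient. -/
def IsParentIn {n : ℕ} (t : HMd F n) (f p : F) : Prop :=
  ∃ (kp : ℕ) (xp : HMd F (kp + 1)), RootedIngr t p xp ∧
    ∃ (kf : ℕ) (xf : HMd F kf), RootedIngr t f xf ∧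
      (MemUpTo xf xp ∨
        ∃ (kg : ℕ) (g : HMd F (kg + 1)), MemUpTo g xp ∧ HMd.NoAtoms g ∧ MemUpTo xf g)

/-- `f` occurs grouped in `t`: some group ingredient of `t` has a member with root `f`. -/
def InGroupOf {n : ℕ} (t : HMd F n) (f : F) : Prop :=
  ∃ (kg : ℕ) (g : HMd F (kg + 1)), Ingr F g t ∧ HMd.NoAtoms g ∧
    ∃ x : HMd F kg, HMd.Memb x g ∧ TreeLike F kg x ∧ 0 < HMd.acount f x

/-- Relaxation: set every multiplicity, at every nesting level, to 1. -/
def HMd.relax : ∀ {n : ℕ}, HMd A n → HMd A n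
  | 0, m => ((m : Multiset A).dedup : Multiset A)
  | n + 1, m =>
      (((m : Multiset (A ⊕ HMd A n)).map (Sum.map id (HMd.relax (n := n)))).dedup :
        Multiset (A ⊕ HMd A n))

/-- Renaming of urelements. -/
def HMd.mapA (g : A → B) : ∀ {n : ℕ}, HMd A n → HMd B n
  | 0, m => ((m : Multiset A).map g : Multiset B)
  | n + 1, m => ((m : Multiset (A ⊕ HMd A n)).map (Sum.map g (HMd.mapA g (n := n))) :
      Multiset (B ⊕ HMd B n))

/-- Cardinality-based feature diagrams over the feature universe `F`. -/
structure CFD (F : Type) where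
  feat : Finset F
  root : F
  root_mem : root ∈ feat
  parent : F → F
  parent_mem : ∀ f ∈ feat, f ≠ root → parent f ∈ feat
  reaches : ∀ f ∈ feat,
    Relation.ReflTransGen (fun a b => a ∈ feat ∧ a ≠ root ∧ parent a = b) f root
  groups : Finset (Finset F)
  groups_sub : ∀ G ∈ groups, ∀ f ∈ G, f ∈ feat ∧ f ≠ root
  groups_card : ∀ G ∈ groups, 1 < G.card
  groups_sib : ∀ G ∈ groups, ∀ f ∈ G, ∀ g ∈ G, parent f = parent g
  groups_disj : ∀ G ∈ groups, ∀ G' ∈ groups, G = G' ∨ Disjoint G G'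
  card : F → Set ℕ
  gcard : Finset F → Set ℕ
  card_ok : ∀ f ∈ feat, f ≠ root → (card f).Nonempty ∧ card f ≠ {0}
  gcard_ok : ∀ G ∈ groups,
    (gcard G).Finite ∧ (gcard G).Nonempty ∧ gcard G ≠ {0} ∧ ∀ c ∈ gcard G, c ≤ G.card
  parent_junk : ∀ f, ¬(f ∈ feat ∧ f ≠ root) → parent f = root
  card_junk : ∀ f, ¬(f ∈ feat ∧ f ≠ root) → card f = ∅
  gcard_junk : ∀ G, G ∉ groups → gcard G = ∅

variable {F : Type}

/-- The solitary (non-grouped) children of `f` in `D`. -/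
def solChildren (D : CFD F) (f : F) : Finset F :=
  D.feat.filter fun s => s ≠ D.root ∧ D.parent s = f ∧ ∀ G ∈ D.groups, s ∉ G

/-- The groups whose members are children of `f` in `D`. -/
def childGroups (D : CFD F) (f : F) : Finset (Finset F) :=
  D.groups.filter fun G => ∃ s ∈ G, D.parent s = f

/-- The hereditary multiset assembled from a choice of sub-products. -/
def prodMS (D : CFD F) (f : F) {n : ℕ} (hs : F → HMd F n) (hc : F → ℕ)
    (hg : Finset F → HMd F n) : HMd F (n + 1) :=
  ((({Sum.inl f} : Multiset (F ⊕ HMd F n))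
    + ((solChildren D f).val.map fun s =>
        Multiset.replicate (hc s) (Sum.inr (hs s) : F ⊕ HMd F n)).sum
    + ((childGroups D f).val.map fun G => (Sum.inr (hg G) : F ⊕ HMd F n)))
    : Multiset (F ⊕ HMd F n))

/-- The hereditary multiset assembled from a group selection. -/
def grpMS {n : ℕ} (sel : Finset F) (hs : F → HMd F n) (hc : F → ℕ) : HMd F (n + 1) :=
  ((sel.val.map fun s =>
      Multiset.replicate (hc s) (Sum.inr (hs s) : F ⊕ HMd F n)).sum :
    Multiset (F ⊕ HMd F n))

mutual
  /-- `HierProd D f m` : `m` is a hierarchical product of the subdiagram of `D` induced by `f`. -/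
  inductive HierProd {F : Type} (D : CFD F) : F → ∀ {n : ℕ}, HMd F n → Prop
    | mk {n : ℕ} (f : F) (hs : F → HMd F n) (hc : F → ℕ) (hg : Finset F → HMd F n)
        (hf : f ∈ D.feat)
        (hsol : ∀ s ∈ solChildren D f, HierProd D s (hs s))
        (hsolc : ∀ s ∈ solChildren D f, hc s ∈ D.card s)
        (hgrp : ∀ G ∈ childGroups D f, GroupProd D G (hg G)) :
        HierProd D f (prodMS D f hs hc hg)
  /-- `GroupProd D G m` : `m` is a hierarchical product associated with the group `G` of `D`. -/
  inductive GroupProd {F : Type} (D : CFD F) : Finset F → ∀ {n : ℕ}, HMd F n → Prop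
    | mk {n : ℕ} (G sel : Finset F) (hs : F → HMd F n) (hc : F → ℕ)
        (hsub : sel ⊆ G) (hG : G ∈ D.groups) (hcard : sel.card ∈ D.gcard G)
        (hmem : ∀ s ∈ sel, HierProd D s (hs s))
        (hmemc : ∀ s ∈ sel, hc s ∈ D.card s) :
        GroupProd D G (grpMS sel hs hc)
end

/-- The hierarchical theory of `D` (as a set of hereditary multisets at all levels). -/
def ProductsSet (D : CFD F) : Set (Σ n, HMd F n) := {m | HierProd D D.root m.2}

/-- A set of (tree-like) multisets is mergeable if a single CFD represents all of them. -/
def Mergeable (U : Set (Σ n, HMd F n)) : Prop :=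
  ∃ D : CFD F, ∀ m ∈ U, HierProd D D.root m.2

/-- A set is completely mergeable if it is exactly the hierarchical theory of some CFD. -/
def CompletelyMergeable (U : Set (Σ n, HMd F n)) : Prop :=
  ∃ D : CFD F, U = ProductsSet D

/-- Pointwise relaxation of a set of hereditary multisets. -/
def relaxSet (U : Set (Σ n, HMd F n)) : Set (Σ n, HMd F n) :=
  {x | ∃ m ∈ U, x = ⟨m.1, HMd.relax m.2⟩}

/-- The flat products of `D` (Definition of flat theory). -/
def FlatProd (D : CFD F) (m : Multiset F) : Prop :=
  (∀ f ∈ m, f ∈ D.feat) ∧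
  m.count D.root = 1 ∧
  (∀ f ∈ D.feat, f ≠ D.root → 0 < m.count f →
    ∃ c ∈ D.card f, m.count f = c * m.count (D.parent f)) ∧
  (∀ f ∈ D.feat, f ≠ D.root → (∀ G ∈ D.groups, f ∉ G) → 0 ∉ D.card f →
    0 < m.count (D.parent f) → 0 < m.count f) ∧
  (∀ G ∈ D.groups, ∀ g ∈ G, 0 < m.count (D.parent g) →
    (G.filter fun f => 0 < m.count f).card ∈ D.gcard G)

/-- Rooted (possibly countably infinite) trees with explicit parent function. -/
structure RTree (N : Type) where
  nodes : Set N
  countable : nodes.Countable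
  root : N
  root_mem : root ∈ nodes
  parent : N → N
  parent_mem : ∀ f ∈ nodes, f ≠ root → parent f ∈ nodes
  reaches : ∀ f ∈ nodes,
    Relation.ReflTransGen (fun a b => a ∈ nodes ∧ a ≠ root ∧ parent a = b) f root


section AuxLemmas

variable {A : Type}

theorem HMd.up_injective : ∀ (n : ℕ), Function.Injective (HMd.up (A := A) n)
  | 0 => Multiset.map_injective Sum.inl_injective
  | n + 1 => Multiset.map_injective
      (Sum.map_injective.mpr ⟨Function.injective_id, HMd.up_injective n⟩)

theorem HMd.liftLe_refl {n : ℕ} (h : n ≤ n) (x : HMd A n) : HMd.liftLe h x = x :=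
  Nat.leRecOn_self x

theorem HMd.liftLe_trans {k m n : ℕ} (h1 : k ≤ m) (h2 : m ≤ n) (x : HMd A k) :
    HMd.liftLe h2 (HMd.liftLe h1 x) = HMd.liftLe (h1.trans h2) x :=
  (Nat.leRecOn_trans h1 h2 x).symm

theorem HMd.liftLe_injective {k n : ℕ} (h : k ≤ n) :
    Function.Injective (HMd.liftLe (A := A) h) :=
  Nat.leRecOn_injective h _ HMd.up_injective

theorem HMd.liftLe_succ {k n : ℕ} (h : k ≤ n) (h2 : k ≤ n + 1) (x : HMd A k) :
    HMd.liftLe h2 x = HMd.up n (HMd.liftLe h x) :=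
  Nat.leRecOn_succ h x

theorem HMd.liftLe_succ_self {n : ℕ} (h : n ≤ n + 1) (x : HMd A n) :
    HMd.liftLe h x = HMd.up n x :=
  Nat.leRecOn_succ' x

theorem hmEq_of_lift_eq {k n N : ℕ} {x : HMd A k} {y : HMd A n} (h1 : k ≤ N) (h2 : n ≤ N)
    (h : HMd.liftLe h1 x = HMd.liftLe h2 y) : hmEq x y := by
  have hM : max k n ≤ N := max_le h1 h2
  apply HMd.liftLe_injective hM
  rw [HMd.liftLe_trans _ hM, HMd.liftLe_trans _ hM]
  exact h

theorem hmEq.lift_eq {k n : ℕ} {x : HMd A k} {y : HMd A n} (h : hmEq x y)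
    {N : ℕ} (h1 : k ≤ N) (h2 : n ≤ N) : HMd.liftLe h1 x = HMd.liftLe h2 y := by
  have hM : max k n ≤ N := max_le h1 h2
  have h' := congrArg (HMd.liftLe hM) h
  rw [HMd.liftLe_trans _ hM, HMd.liftLe_trans _ hM] at h'
  exact h'

theorem hmEq_refl {k : ℕ} (x : HMd A k) : hmEq x x := rfl

theorem hmEq_symm {k n : ℕ} {x : HMd A k} {y : HMd A n} (h : hmEq x y) : hmEq y x := by
  have := h.lift_eq (N := max k n) (le_max_left _ _) (le_max_right _ _)
  exact hmEq_of_lift_eq (le_max_right _ _) (le_max_left _ _) this.symm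

theorem hmEq_trans {k m n : ℕ} {x : HMd A k} {y : HMd A m} {z : HMd A n}
    (h1 : hmEq x y) (h2 : hmEq y z) : hmEq x z := by
  set N := max k (max m n) with hN
  have hk : k ≤ N := le_max_left _ _
  have hm : m ≤ N := le_trans (le_max_left _ _) (le_max_right _ _)
  have hn : n ≤ N := le_trans (le_max_right _ _) (le_max_right _ _)
  exact hmEq_of_lift_eq hk hn ((h1.lift_eq hk hm).trans (h2.lift_eq hm hn))

theorem hmEq_up {n : ℕ} (x : HMd A n) : hmEq (HMd.up n x) x :=
  hmEq_of_lift_eq (N := n + 1) le_rfl (Nat.le_succ n)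
    (by rw [HMd.liftLe_refl, HMd.liftLe_succ_self])

end AuxLemmas


section AuxLemmas2

variable {A : Type}

theorem count_map_inj {α β : Type} {inst1 : DecidableEq α} {inst2 : DecidableEq β}
    {φ : α → β} (hφ : Function.Injective φ) (a : α) (s : Multiset α) :
    (s.map φ).count (φ a) = s.count a := by
  induction s using Multiset.induction_on with
  | empty => simp
  | cons e s ih =>
    rw [Multiset.map_cons, Multiset.count_cons, Multiset.count_cons, ih]
    congr 1
    by_cases h : a = e
    · simp [h]
    · rw [if_neg h, if_neg (fun hc => h (hφ hc))]

theorem HMd.flat_up : ∀ (n : ℕ) (x : HMd A n), (HMd.up n x).flat = x.flat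
  | 0, x => by
      simp only [HMd.up, HMd.flat, Multiset.bind_map]
      simpa using Multiset.bind_singleton (s := x) id
  | n + 1, x => by
      simp only [HMd.up, HMd.flat, Multiset.bind_map]
      refine Multiset.bind_congr (fun e _ => ?_)
      cases e with
      | inl a => rfl
      | inr y => exact HMd.flat_up n y

theorem HMd.flat_liftLe {k n : ℕ} (h : k ≤ n) (x : HMd A k) :
    (HMd.liftLe h x).flat = x.flat := by
  induction n, h using Nat.le_induction with
  | base => rw [HMd.liftLe_refl]
  | succ n hn ih => rw [HMd.liftLe_succ hn, HMd.flat_up, ih]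

theorem hmEq.flat_eq {k n : ℕ} {x : HMd A k} {y : HMd A n} (h : hmEq x y) :
    x.flat = y.flat := by
  have := congrArg HMd.flat h
  rwa [HMd.flat_liftLe, HMd.flat_liftLe] at this

theorem HMd.acount_up {F : Type} : ∀ (n : ℕ) (x : HMd F n) (f : F),
    (HMd.up n x).acount f = x.acount f
  | 0, x, f => by
      simp only [HMd.up, HMd.acount]
      exact count_map_inj Sum.inl_injective f x
  | n + 1, x, f => by
      simp only [HMd.up, HMd.acount]
      exact count_map_inj
        (Sum.map_injective.mpr ⟨Function.injective_id, HMd.up_injective n⟩) (Sum.inl f) x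

theorem HMd.acount_liftLe {F : Type} {k n : ℕ} (h : k ≤ n) (x : HMd F k) (f : F) :
    (HMd.liftLe h x).acount f = x.acount f := by
  induction n, h using Nat.le_induction with
  | base => rw [HMd.liftLe_refl]
  | succ n hn ih => rw [HMd.liftLe_succ hn, HMd.acount_up, ih]

theorem hmEq.acount_eq {F : Type} {k n : ℕ} {x : HMd F k} {y : HMd F n} (h : hmEq x y)
    (f : F) : x.acount f = y.acount f := by
  have := congrArg (HMd.acount f) h
  rwa [HMd.acount_liftLe, HMd.acount_liftLe] at this

theorem HMd.acount_le_flat_count {F : Type} : ∀ {n : ℕ} (x : HMd F n) (f : F),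
    x.acount f ≤ x.flat.count f
  | 0, _, _ => le_rfl
  | n + 1, x, f => by
      simp only [HMd.acount, HMd.flat]
      induction x using Multiset.induction_on with
      | empty => simp
      | cons e s ih =>
        rw [Multiset.cons_bind, Multiset.count_add]
        by_cases h : (Sum.inl f : F ⊕ HMd F n) = e
        · subst h
          rw [Multiset.count_cons_self]
          have h1 : (Multiset.count f
              ((fun e => match e with
                | Sum.inl a => ({a} : Multiset F)
                | Sum.inr (x : HMd F n) => x.flat) (Sum.inl f))) = 1 := by simp
          simp only [] at h1 ⊢
          omega
        · rw [Multiset.count_cons_of_ne h]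
          exact ih.trans (Nat.le_add_left _ _)

theorem HMd.mem_flat_of_acount_pos {F : Type} {n : ℕ} {x : HMd F n} {f : F}
    (h : 0 < x.acount f) : f ∈ x.flat :=
  Multiset.count_pos.mp (lt_of_lt_of_le h (HMd.acount_le_flat_count x f))

end AuxLemmas2


section AuxLemmas3

variable {A : Type}

theorem HMd.flat_memb_le {n : ℕ} {y : HMd A n} {m : HMd A (n + 1)} (h : y.Memb m) :
    y.flat ≤ m.flat := by
  obtain ⟨m', rfl⟩ := Multiset.exists_cons_of_mem h
  show y.flat ≤ (Sum.inr y ::ₘ m').bind _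
  rw [Multiset.cons_bind]
  exact Multiset.le_add_right _ _

theorem HMd.count_flat_memb {F : Type} {n : ℕ} {y : HMd F n} {m : HMd F (n + 1)}
    (h : y.Memb m) (f : F) : y.flat.count f + m.acount f ≤ m.flat.count f := by
  obtain ⟨m', rfl⟩ := Multiset.exists_cons_of_mem h
  have h1 : HMd.flat (n := n + 1) (Sum.inr y ::ₘ m') = y.flat + HMd.flat (n := n + 1) m' := by
    show (Sum.inr y ::ₘ m').bind _ = _
    rw [Multiset.cons_bind]; rfl
  have h2 : HMd.acount (n := n + 1) f (Sum.inr y ::ₘ m') = HMd.acount (n := n + 1) f m' := by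
    show Multiset.count _ _ = _
    rw [Multiset.count_cons_of_ne (by simp)]
    rfl
  have h3 := HMd.acount_le_flat_count (n := n + 1) m' f
  rw [h1, h2, Multiset.count_add]
  omega

theorem count_flat_ingr {F : Type} {k n : ℕ} {x : HMd F k} {m : HMd F n}
    (h : Ingr F x m) (f : F) : x.flat.count f + m.acount f ≤ m.flat.count f := by
  induction h with
  | mem h => exact HMd.count_flat_memb h f
  | tail hxy hy ih =>
    have h2 := HMd.count_flat_memb hy f
    omega

theorem count_flat_ingrE {F : Type} {k n : ℕ} {x : HMd F k} {m : HMd F n}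
    (h : IngrE x m) (f : F) : x.flat.count f ≤ m.flat.count f := by
  rcases h with h | h
  · have := count_flat_ingr h f; omega
  · rw [h.flat_eq]

theorem mem_flat_of_ingrE {F : Type} {k n : ℕ} {x : HMd F k} {m : HMd F n}
    (h : IngrE x m) {f : F} (hf : f ∈ x.flat) : f ∈ m.flat := by
  have h1 := count_flat_ingrE h f
  have h2 := Multiset.count_pos.mpr hf
  exact Multiset.count_pos.mp (by omega)

theorem no_root_ingr {F : Type} {k m : ℕ} {x : HMd F k} {u : HMd F m} {f : F}
    (hx : Ingr F x u) (hcnt : x.flat.count f = u.flat.count f)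
    (hpos : 0 < u.acount f) : False := by
  have := count_flat_ingr hx f
  omega

theorem ingrE_refl {k : ℕ} (x : HMd A k) : IngrE x x := Or.inr (hmEq_refl x)

/-- no ingredients at level 0 -/
theorem not_ingr_zero {k : ℕ} {x : HMd A k} {m : HMd A 0} : ¬ Ingr A x m := by
  intro h
  generalize hn : (0 : ℕ) = n0 at *
  cases h <;> omega

theorem ingr_add_left {k n : ℕ} {x : HMd A k} {m₁ m₂ : HMd A (n + 1)}
    (h : Ingr A x m₁) : Ingr A x (m₁ + m₂) := by
  cases h with
  | mem h => exact Ingr.mem (Multiset.mem_add.mpr (Or.inl h))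
  | tail hxy hy => exact Ingr.tail hxy (Multiset.mem_add.mpr (Or.inl hy))

theorem memb_up_zero {y : HMd A 0} {m : HMd A 0} : ¬ y.Memb (HMd.up 0 m) := by
  intro h
  obtain ⟨a, _, ha⟩ := Multiset.mem_map.mp h
  exact Sum.inl_ne_inr ha

theorem memb_up_succ {n : ℕ} {y : HMd A (n + 1)} {m : HMd A (n + 1)}
    (h : y.Memb (HMd.up (n + 1) m)) : ∃ z : HMd A n, z.Memb m ∧ y = HMd.up n z := by
  obtain ⟨e, he, hee⟩ := Multiset.mem_map.mp h
  cases e with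
  | inl a => exact absurd hee (by simp [Sum.map])
  | inr z => exact ⟨z, he, (Sum.inr_injective hee).symm⟩

theorem memb_up_memb {n : ℕ} {y : HMd A n} {m : HMd A (n + 1)} (h : y.Memb m) :
    (HMd.up n y).Memb (HMd.up (n + 1) m) :=
  Multiset.mem_map.mpr ⟨Sum.inr y, h, rfl⟩

theorem ingr_up {k n : ℕ} {x : HMd A k} {m : HMd A n} (h : Ingr A x m) :
    Ingr A (HMd.up k x) (HMd.up n m) := by
  induction h with
  | mem h => exact Ingr.mem (memb_up_memb h)
  | tail hxy hy ih => exact Ingr.tail ih (memb_up_memb hy)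

theorem ingr_up_inv_aux {k nn : ℕ} {x : HMd A k} {m' : HMd A nn} (h : Ingr A x m') :
    ∀ (n : ℕ) (m : HMd A n), nn = n + 1 → HEq m' (HMd.up n m) →
    ∃ (p : ℕ) (x' : HMd A p), hmEq x' x ∧ Ingr A x' m := by
  induction h with
  | mem h =>
    intro n m hn hm
    cases n with
    | zero =>
      obtain rfl := Nat.succ.inj hn
      obtain rfl := eq_of_heq hm
      exact absurd h memb_up_zero
    | succ q =>
      obtain rfl := Nat.succ.inj hn
      obtain rfl := eq_of_heq hm
      obtain ⟨z, hz, rfl⟩ := memb_up_succ h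
      exact ⟨q, z, hmEq_symm (hmEq_up z), Ingr.mem hz⟩
  | tail hxy hy ih =>
    intro n m hn hm
    cases n with
    | zero =>
      obtain rfl := Nat.succ.inj hn
      obtain rfl := eq_of_heq hm
      exact absurd hy memb_up_zero
    | succ q =>
      obtain rfl := Nat.succ.inj hn
      obtain rfl := eq_of_heq hm
      obtain ⟨z, hz, rfl⟩ := memb_up_succ hy
      obtain ⟨p, x', hx', hi⟩ := ih q z rfl HEq.rfl
      exact ⟨p, x', hx', Ingr.tail hi hz⟩

theorem ingr_up_inv {k n : ℕ} {x : HMd A k} {m : HMd A n}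
    (h : Ingr A x (HMd.up n m)) :
    ∃ (p : ℕ) (x' : HMd A p), hmEq x' x ∧ Ingr A x' m :=
  ingr_up_inv_aux h n m rfl HEq.rfl

end AuxLemmas3


section AuxLemmas4

variable {A : Type}

theorem HMd.flat_single {F : Type} : ∀ (n : ℕ) (f : F), (HMd.single n f).flat = {f}
  | 0, f => rfl
  | n + 1, f => by
      show Multiset.bind {Sum.inl f} _ = {f}
      rw [Multiset.singleton_bind]

theorem HMd.acount_single {F : Type} : ∀ (n : ℕ) (f : F), (HMd.single n f).acount f = 1
  | 0, f => by simp [HMd.single, HMd.acount]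
  | n + 1, f => by simp [HMd.single, HMd.acount]

theorem not_ingr_single {k : ℕ} {x : HMd A k} : ∀ (n : ℕ) (f : A),
    ¬ Ingr A x (HMd.single n f)
  | 0, f => not_ingr_zero
  | n + 1, f => by
      intro h
      cases h with
      | mem h => simp [HMd.single, HMd.Memb] at h
      | tail hxy hy => simp [HMd.single, HMd.Memb] at hy

theorem flat_add {n : ℕ} (m₁ m₂ : HMd A (n + 1)) :
    HMd.flat (n := n + 1) (m₁ + m₂) = HMd.flat (n := n + 1) m₁ + HMd.flat (n := n + 1) m₂ := by
  show Multiset.bind (m₁ + m₂) _ = _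
  rw [Multiset.add_bind]
  rfl

theorem acount_add {F : Type} {n : ℕ} (f : F) (m₁ m₂ : HMd F (n + 1)) :
    HMd.acount (n := n + 1) f (m₁ + m₂)
      = HMd.acount (n := n + 1) f m₁ + HMd.acount (n := n + 1) f m₂ := by
  show Multiset.count _ (m₁ + m₂) = _
  rw [Multiset.count_add]
  rfl

theorem flat_rep {n : ℕ} (c : ℕ) (x : HMd A n) :
    (HMd.rep c x).flat = c • x.flat := by
  show Multiset.bind (Multiset.replicate c (Sum.inr x)) _ = _
  induction c with
  | zero => simp
  | succ c ih =>
    rw [Multiset.replicate_succ, Multiset.cons_bind, ih, succ_nsmul, add_comm]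

theorem acount_rep {F : Type} {n : ℕ} (f : F) (c : ℕ) (x : HMd F n) :
    (HMd.rep c x).acount f = 0 := by
  show Multiset.count _ (Multiset.replicate c (Sum.inr x)) = 0
  rw [Multiset.count_eq_zero]
  intro h
  exact Sum.inl_ne_inr (Multiset.eq_of_mem_replicate h)

theorem memb_rep {n : ℕ} {y x : HMd A n} {c : ℕ} (h : y.Memb (HMd.rep c x)) :
    0 < c ∧ y = x := by
  obtain ⟨hc, he⟩ := Multiset.mem_replicate.mp h
  exact ⟨Nat.pos_of_ne_zero hc, Sum.inr_injective he⟩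

theorem memb_rep_self {n : ℕ} {x : HMd A n} {c : ℕ} (hc : 0 < c) :
    x.Memb (HMd.rep c x) :=
  Multiset.mem_replicate.mpr ⟨Nat.pos_iff_ne_zero.mp hc, rfl⟩

/-- inversion for `Ingr x (t₁ + rep c t₂)` -/
theorem ingr_add_rep_inv {k n : ℕ} {x : HMd A k} {t₁ : HMd A (n + 1)} {t₂ : HMd A n} {c : ℕ}
    (h : Ingr A x (t₁ + HMd.rep c t₂)) :
    Ingr A x t₁ ∨ (0 < c ∧ (hmEq x t₂ ∨ Ingr A x t₂)) := by
  cases h with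
  | mem h =>
    rcases Multiset.mem_add.mp h with h | h
    · exact Or.inl (Ingr.mem h)
    · obtain ⟨hc, rfl⟩ := memb_rep h
      exact Or.inr ⟨hc, Or.inl (hmEq_refl _)⟩
  | tail hxy hy =>
    rcases Multiset.mem_add.mp hy with h | h
    · exact Or.inl (Ingr.tail hxy h)
    · obtain ⟨hc, rfl⟩ := memb_rep h
      exact Or.inr ⟨hc, Or.inr hxy⟩

theorem ofList_cons {n : ℕ} (p : HMd A n × ℕ) (l : List (HMd A n × ℕ)) :
    HMd.ofList (p :: l) = HMd.rep p.2 p.1 + HMd.ofList l := by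
  show (List.map _ (p :: l)).sum = _
  rw [List.map_cons, List.sum_cons]
  rfl

theorem memb_ofList_iff {n : ℕ} {l : List (HMd A n × ℕ)} {y : HMd A n} :
    y.Memb (HMd.ofList l) ↔ ∃ p ∈ l, 0 < p.2 ∧ y = p.1 := by
  induction l with
  | nil =>
    constructor
    · intro h; exact absurd h (by simp [HMd.ofList, HMd.Memb])
    · rintro ⟨p, hp, _⟩; simp at hp
  | cons p l ih =>
    rw [ofList_cons]
    constructor
    · intro h
      rcases Multiset.mem_add.mp h with h | h
      · obtain ⟨hc, rfl⟩ := memb_rep h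
        exact ⟨p, List.mem_cons_self .., hc, rfl⟩
      · obtain ⟨q, hq, hqc, rfl⟩ := ih.mp h
        exact ⟨q, List.mem_cons_of_mem _ hq, hqc, rfl⟩
    · rintro ⟨q, hq, hqc, rfl⟩
      rcases List.mem_cons.mp hq with rfl | hq
      · exact Multiset.mem_add.mpr (Or.inl (memb_rep_self hqc))
      · exact Multiset.mem_add.mpr (Or.inr (ih.mpr ⟨q, hq, hqc, rfl⟩))

theorem ingr_ofList_inv {k n : ℕ} {x : HMd A k} {l : List (HMd A n × ℕ)}
    (h : Ingr A x (HMd.ofList l)) :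
    ∃ p ∈ l, 0 < p.2 ∧ IngrE x p.1 := by
  cases h with
  | mem h =>
    obtain ⟨p, hp, hpc, rfl⟩ := memb_ofList_iff.mp h
    exact ⟨p, hp, hpc, Or.inr (hmEq_refl _)⟩
  | tail hxy hy =>
    obtain ⟨p, hp, hpc, rfl⟩ := memb_ofList_iff.mp hy
    exact ⟨p, hp, hpc, Or.inl hxy⟩

theorem acount_ofList {F : Type} {n : ℕ} (f : F) (l : List (HMd F n × ℕ)) :
    (HMd.ofList l).acount f = 0 := by
  induction l with
  | nil => rfl
  | cons p l ih =>
    rw [ofList_cons, acount_add, ih, acount_rep]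

theorem flat_ofList_mem {F : Type} {n : ℕ} {f : F} {l : List (HMd F n × ℕ)} :
    f ∈ (HMd.ofList l).flat ↔ ∃ p ∈ l, 0 < p.2 ∧ f ∈ p.1.flat := by
  induction l with
  | nil =>
    constructor
    · intro h; exact absurd h (by show f ∉ Multiset.bind 0 _; simp)
    · rintro ⟨p, hp, _⟩; simp at hp
  | cons p l ih =>
    rw [ofList_cons, flat_add, Multiset.mem_add, flat_rep, ih]
    constructor
    · rintro (h | ⟨q, hq, hqc, hqf⟩)
      · rw [Multiset.mem_nsmul] at h
        exact ⟨p, List.mem_cons_self .., Nat.pos_of_ne_zero h.1, h.2⟩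
      · exact ⟨q, List.mem_cons_of_mem _ hq, hqc, hqf⟩
    · rintro ⟨q, hq, hqc, hqf⟩
      rcases List.mem_cons.mp hq with rfl | hq
      · exact Or.inl (Multiset.mem_nsmul.mpr ⟨Nat.pos_iff_ne_zero.mp hqc, hqf⟩)
      · exact Or.inr ⟨q, hq, hqc, hqf⟩

theorem FDisj.symm {k n : ℕ} {x : HMd A k} {y : HMd A n} (h : FDisj x y) : FDisj y x :=
  fun a ha hax => h a hax ha

/-- tree-like up to lifting -/
def TLU {F : Type} {k : ℕ} (x : HMd F k) : Prop :=
  ∃ (k' : ℕ) (x' : HMd F k'), hmEq x x' ∧ TreeLike F k' x'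

theorem TLU.of_treeLike {F : Type} {k : ℕ} {x : HMd F k} (h : TreeLike F k x) : TLU x :=
  ⟨k, x, hmEq_refl x, h⟩

theorem TLU.of_hmEq {F : Type} {k k' : ℕ} {x : HMd F k} {y : HMd F k'}
    (h : hmEq x y) (hy : TLU y) : TLU x := by
  obtain ⟨k'', y', hy', ht⟩ := hy
  exact ⟨k'', y', hmEq_trans h hy', ht⟩

end AuxLemmas4


theorem treelike_key {F : Type} {n : ℕ} {t : HMd F n} (ht : TreeLike F n t) :
    ∀ f ∈ HMd.flat t,
      (∃ (k : ℕ) (x : HMd F k), IngrE x t ∧ TreeLike F k x ∧ 0 < HMd.acount f x) ∧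
      (∀ (k₁ k₂ : ℕ) (x₁ : HMd F k₁) (x₂ : HMd F k₂),
        IngrE x₁ t → TLU x₁ → 0 < HMd.acount f x₁ →
        IngrE x₂ t → TLU x₂ → 0 < HMd.acount f x₂ → hmEq x₁ x₂) := by
  induction ht with
  | sing n f0 =>
    intro f hf
    rw [HMd.flat_single, Multiset.mem_singleton] at hf
    subst hf
    constructor
    · exact ⟨n, HMd.single n f, ingrE_refl _, TreeLike.sing n f,
        by rw [HMd.acount_single]; omega⟩
    · intro k1 k2 x1 x2 h1 _ _ h2 _ _
      rcases h1 with h1 | h1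
      · exact absurd h1 (not_ingr_single n f)
      · rcases h2 with h2 | h2
        · exact absurd h2 (not_ingr_single n f)
        · exact hmEq_trans h1 (hmEq_symm h2)
  | @up n t ht ih =>
    intro f hf
    rw [HMd.flat_up] at hf
    constructor
    · obtain ⟨k, x, hIE, hTL, hac⟩ := (ih f hf).1
      rcases hIE with hI | hE
      · exact ⟨k + 1, HMd.up k x, Or.inl (ingr_up hI), TreeLike.up hTL,
          by rw [HMd.acount_up]; exact hac⟩
      · refine ⟨n + 1, HMd.up n t, ingrE_refl _, TreeLike.up ht, ?_⟩
        rw [HMd.acount_up, ← hE.acount_eq f]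
        exact hac
    · intro k1 k2 x1 x2 h1 tl1 a1 h2 tl2 a2
      have reduce : ∀ {k : ℕ} {x : HMd F k}, IngrE x (HMd.up n t) → TLU x →
          0 < x.acount f →
          ∃ (k' : ℕ) (x' : HMd F k'), hmEq x' x ∧ IngrE x' t ∧ TLU x' ∧ 0 < x'.acount f := by
        rintro k x (hI | hE) htlu hax
        · obtain ⟨p, x', hE', hI'⟩ := ingr_up_inv hI
          exact ⟨p, x', hE', Or.inl hI', TLU.of_hmEq hE' htlu,
            by rw [hE'.acount_eq f]; exact hax⟩
        · exact ⟨k, x, hmEq_refl x, Or.inr (hmEq_trans hE (hmEq_up t)), htlu, hax⟩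
      obtain ⟨p1, x1', hE1, hIE1, htlu1, ha1⟩ := reduce h1 tl1 a1
      obtain ⟨p2, x2', hE2, hIE2, htlu2, ha2⟩ := reduce h2 tl2 a2
      have := (ih f hf).2 _ _ x1' x2' hIE1 htlu1 ha1 hIE2 htlu2 ha2
      exact hmEq_trans (hmEq_symm hE1) (hmEq_trans this hE2)
  | @sol n t1 t2 c ht1 ht2 hd ih1 ih2 =>
    intro f hf
    have hmembt2 : 0 < c → HMd.Memb t2 (t1 + HMd.rep c t2) :=
      fun hc => Multiset.mem_add.mpr (Or.inr (memb_rep_self hc))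
    have hfcases : f ∈ HMd.flat t1 ∨ (0 < c ∧ f ∈ HMd.flat t2) := by
      rw [flat_add, Multiset.mem_add, flat_rep, Multiset.mem_nsmul] at hf
      rcases hf with h | ⟨hc, h⟩
      · exact Or.inl h
      · exact Or.inr ⟨Nat.pos_of_ne_zero hc, h⟩
    have hacT : HMd.acount (n := n + 1) f (t1 + HMd.rep c t2) = t1.acount f := by
      rw [acount_add, acount_rep, Nat.add_zero]
    constructor
    · rcases hfcases with hf1 | ⟨hc, hf2⟩
      · obtain ⟨k, x, hIE, hTL, hac⟩ := (ih1 f hf1).1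
        rcases hIE with hI | hE
        · exact ⟨k, x, Or.inl (ingr_add_left hI), hTL, hac⟩
        · refine ⟨n + 1, t1 + HMd.rep c t2, ingrE_refl _, TreeLike.sol c ht1 ht2 hd, ?_⟩
          rw [hacT, ← hE.acount_eq f]
          exact hac
      · obtain ⟨k, x, hIE, hTL, hac⟩ := (ih2 f hf2).1
        rcases hIE with hI | hE
        · exact ⟨k, x, Or.inl (Ingr.tail hI (hmembt2 hc)), hTL, hac⟩
        · refine ⟨n, t2, Or.inl (Ingr.mem (hmembt2 hc)), ht2, ?_⟩
          rw [← hE.acount_eq f]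
          exact hac
    · intro k1 k2 x1 x2 h1 tl1 a1 h2 tl2 a2
      have cls : ∀ {k : ℕ} {x : HMd F k}, IngrE x (t1 + HMd.rep c t2) →
          hmEq x (t1 + HMd.rep c t2) ∨ Ingr F x t1 ∨ IngrE x t2 := by
        rintro k x (hI | hE)
        · rcases ingr_add_rep_inv hI with h | ⟨_, h | h⟩
          · exact Or.inr (Or.inl h)
          · exact Or.inr (Or.inr (Or.inr h))
          · exact Or.inr (Or.inr (Or.inl h))
        · exact Or.inl hE
      by_cases hf1 : f ∈ HMd.flat t1
      · have hnf2 : f ∉ HMd.flat t2 := hd f hf1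
        have cls1 : ∀ {k : ℕ} {x : HMd F k}, IngrE x (t1 + HMd.rep c t2) →
            0 < x.acount f → hmEq x (t1 + HMd.rep c t2) ∨ Ingr F x t1 := by
          intro k x hIE hax
          rcases cls hIE with h | h | h
          · exact Or.inl h
          · exact Or.inr h
          · exact absurd (mem_flat_of_ingrE h (HMd.mem_flat_of_acount_pos hax)) hnf2
        have mixed : ∀ {k k' : ℕ} {x : HMd F k} {x' : HMd F k'},
            hmEq x (t1 + HMd.rep c t2) → 0 < x.acount f →
            Ingr F x' t1 → TLU x' → 0 < x'.acount f → False := by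
          intro k k' x x' hEx hax hIx' htlux' hax'
          have hat1 : 0 < t1.acount f := by
            have := hEx.acount_eq f
            rw [hacT] at this
            omega
          have huniq := (ih1 f hf1).2 _ _ x' t1 (Or.inl hIx') htlux' hax'
            (ingrE_refl t1) (TLU.of_treeLike ht1) hat1
          exact no_root_ingr hIx' (by rw [huniq.flat_eq]) hat1
        rcases cls1 h1 a1 with c1 | c1 <;> rcases cls1 h2 a2 with c2 | c2
        · exact hmEq_trans c1 (hmEq_symm c2)
        · exact absurd (mixed c1 a1 c2 tl2 a2) not_false
        · exact absurd (mixed c2 a2 c1 tl1 a1) not_false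
        · exact (ih1 f hf1).2 _ _ x1 x2 (Or.inl c1) tl1 a1 (Or.inl c2) tl2 a2
      · have hf2 : f ∈ HMd.flat t2 := by
          rcases hfcases with h | ⟨_, h⟩
          · exact absurd h hf1
          · exact h
        have cls2 : ∀ {k : ℕ} {x : HMd F k}, IngrE x (t1 + HMd.rep c t2) →
            0 < x.acount f → IngrE x t2 := by
          intro k x hIE hax
          rcases cls hIE with h | h | h
          · exfalso
            have := h.acount_eq f
            rw [hacT] at this
            exact hf1 (HMd.mem_flat_of_acount_pos (show 0 < t1.acount f by omega))
          · exact absurd (mem_flat_of_ingrE (Or.inl h) (HMd.mem_flat_of_acount_pos hax)) hf1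
          · exact h
        exact (ih2 f hf2).2 _ _ x1 x2 (cls2 h1 a1) tl1 a1 (cls2 h2 a2) tl2 a2
  | @grp n t l ht htl hdisj hpw ih ihl =>
    intro f hf
    have hmembg : (HMd.ofList l).Memb (HMd.up (n + 1) t + HMd.rep 1 (HMd.ofList l)) :=
      Multiset.mem_add.mpr (Or.inr (memb_rep_self one_pos))
    have hacT : HMd.acount (n := n + 2) f (HMd.up (n + 1) t + HMd.rep 1 (HMd.ofList l))
        = t.acount f := by
      rw [acount_add, acount_rep, Nat.add_zero, HMd.acount_up]
    have hfcases : f ∈ HMd.flat t ∨ ∃ p ∈ l, 0 < p.2 ∧ f ∈ p.1.flat := by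
      rw [flat_add, Multiset.mem_add, flat_rep, one_nsmul, HMd.flat_up, flat_ofList_mem] at hf
      exact hf
    constructor
    · rcases hfcases with hft | ⟨p, hp, hpc, hfp⟩
      · obtain ⟨k, x, hIE, hTL, hac⟩ := (ih f hft).1
        rcases hIE with hI | hE
        · exact ⟨k + 1, HMd.up k x, Or.inl (ingr_add_left (ingr_up hI)), TreeLike.up hTL,
            by rw [HMd.acount_up]; exact hac⟩
        · refine ⟨n + 2, _, ingrE_refl _, TreeLike.grp l ht htl hdisj hpw, ?_⟩
          rw [hacT, ← hE.acount_eq f]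
          exact hac
      · obtain ⟨k, x, hIE, hTL, hac⟩ := (ihl p hp f hfp).1
        have hmembp : p.1.Memb (HMd.ofList l) := memb_ofList_iff.mpr ⟨p, hp, hpc, rfl⟩
        rcases hIE with hI | hE
        · exact ⟨k, x, Or.inl (Ingr.tail (Ingr.tail hI hmembp) hmembg), hTL, hac⟩
        · refine ⟨n, p.1, Or.inl (Ingr.tail (Ingr.mem hmembp) hmembg), htl p hp, ?_⟩
          rw [← hE.acount_eq f]
          exact hac
    · intro k1 k2 x1 x2 h1 tl1 a1 h2 tl2 a2
      have cls : ∀ {k : ℕ} {x : HMd F k},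
          IngrE x (HMd.up (n + 1) t + HMd.rep 1 (HMd.ofList l)) → 0 < x.acount f →
          hmEq x (HMd.up (n + 1) t + HMd.rep 1 (HMd.ofList l)) ∨
          (∃ (p : ℕ) (x' : HMd F p), hmEq x' x ∧ Ingr F x' t) ∨
          (∃ q ∈ l, IngrE x q.1) := by
        rintro k x (hI | hE) hax
        · rcases ingr_add_rep_inv hI with h | ⟨_, h | h⟩
          · exact Or.inr (Or.inl (ingr_up_inv h))
          · exfalso
            have := h.acount_eq f
            rw [acount_ofList] at this
            omega
          · obtain ⟨q, hq, _, hIE⟩ := ingr_ofList_inv h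
            exact Or.inr (Or.inr ⟨q, hq, hIE⟩)
        · exact Or.inl hE
      by_cases hft : f ∈ HMd.flat t
      · have cls1 : ∀ {k : ℕ} {x : HMd F k},
            IngrE x (HMd.up (n + 1) t + HMd.rep 1 (HMd.ofList l)) → 0 < x.acount f →
            hmEq x (HMd.up (n + 1) t + HMd.rep 1 (HMd.ofList l)) ∨
            (∃ (p : ℕ) (x' : HMd F p), hmEq x' x ∧ Ingr F x' t) := by
          intro k x hIE hax
          rcases cls hIE hax with h | h | ⟨q, hq, hIE'⟩
          · exact Or.inl h
          · exact Or.inr h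
          · exact absurd (mem_flat_of_ingrE hIE' (HMd.mem_flat_of_acount_pos hax))
              (hdisj q hq f hft)
        have mixed : ∀ {k' : ℕ} {x' : HMd F k'},
            0 < t.acount f → Ingr F x' t → TLU x' → 0 < x'.acount f → False := by
          intro k' x' hat hI' htlux' hax'
          have huniq := (ih f hft).2 _ _ x' t (Or.inl hI') htlux' hax'
            (ingrE_refl t) (TLU.of_treeLike ht) hat
          exact no_root_ingr hI' (by rw [huniq.flat_eq]) hat
        have hatof : ∀ {k : ℕ} {x : HMd F k},
            hmEq x (HMd.up (n + 1) t + HMd.rep 1 (HMd.ofList l)) → 0 < x.acount f →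
            0 < t.acount f := by
          intro k x hEx hax
          have := hEx.acount_eq f
          rw [hacT] at this
          omega
        rcases cls1 h1 a1 with c1 | ⟨p1, x1', hE1, hI1⟩ <;>
          rcases cls1 h2 a2 with c2 | ⟨p2, x2', hE2, hI2⟩
        · exact hmEq_trans c1 (hmEq_symm c2)
        · exact (mixed (hatof c1 a1) hI2 (TLU.of_hmEq hE2 tl2)
            (by rw [hE2.acount_eq f]; exact a2)).elim
        · exact (mixed (hatof c2 a2) hI1 (TLU.of_hmEq hE1 tl1)
            (by rw [hE1.acount_eq f]; exact a1)).elim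
        · have ha1' : 0 < x1'.acount f := by rw [hE1.acount_eq f]; exact a1
          have ha2' : 0 < x2'.acount f := by rw [hE2.acount_eq f]; exact a2
          have := (ih f hft).2 _ _ x1' x2' (Or.inl hI1)
            (TLU.of_hmEq hE1 tl1) ha1' (Or.inl hI2)
            (TLU.of_hmEq hE2 tl2) ha2'
          exact hmEq_trans (hmEq_symm hE1) (hmEq_trans this hE2)
      · have cls2 : ∀ {k : ℕ} {x : HMd F k},
            IngrE x (HMd.up (n + 1) t + HMd.rep 1 (HMd.ofList l)) → 0 < x.acount f →
            ∃ q ∈ l, IngrE x q.1 := by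
          intro k x hIE hax
          rcases cls hIE hax with h | ⟨p, x', hE', hI'⟩ | h
          · exfalso
            have := h.acount_eq f
            rw [hacT] at this
            exact hft (HMd.mem_flat_of_acount_pos (show 0 < t.acount f by omega))
          · exfalso
            have hfx' : f ∈ x'.flat := by
              rw [hE'.flat_eq]
              exact HMd.mem_flat_of_acount_pos hax
            exact hft (mem_flat_of_ingrE (Or.inl hI') hfx')
          · exact h
        obtain ⟨q1, hq1, hIE1⟩ := cls2 h1 a1
        obtain ⟨q2, hq2, hIE2⟩ := cls2 h2 a2
        have hfq1 : f ∈ q1.1.flat := mem_flat_of_ingrE hIE1 (HMd.mem_flat_of_acount_pos a1)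
        have hfq2 : f ∈ q2.1.flat := mem_flat_of_ingrE hIE2 (HMd.mem_flat_of_acount_pos a2)
        by_cases hqq : q1 = q2
        · subst hqq
          exact (ihl q1 hq1 f hfq1).2 _ _ x1 x2 hIE1 tl1 a1 hIE2 tl2 a2
        · exact absurd hfq2
            (by
              haveI : Std.Symm (fun p q : HMd F n × ℕ => FDisj p.1 q.1) :=
                ⟨fun p q h => FDisj.symm h⟩
              exact hpw.forall hq1 hq2 hqq f hfq1)


/-- for a tree-like multiset `t` and any `f` in the support of `flat t`,
there is a unique (up to lifting) ingredient of `t` (where `t` itself counts) that is a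
tree-like multiset with root `f`. -/
theorem treelike_unique_induced (F : Type) (n : ℕ) (t : HMd F n) (ht : TreeLike F n t) :
    ∀ f ∈ HMd.flat t,
      (∃ (k : ℕ) (x : HMd F k), IngrE x t ∧ TreeLike F k x ∧ 0 < HMd.acount f x) ∧
      (∀ (k₁ k₂ : ℕ) (x₁ : HMd F k₁) (x₂ : HMd F k₂),
        IngrE x₁ t → TreeLike F k₁ x₁ → 0 < HMd.acount f x₁ →
        IngrE x₂ t → TreeLike F k₂ x₂ → 0 < HMd.acount f x₂ → hmEq x₁ x₂) := by
  intro f hf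
  refine ⟨(treelike_key ht f hf).1, ?_⟩
  intro k1 k2 x1 x2 h1 tl1 a1 h2 tl2 a2
  exact (treelike_key ht f hf).2 k1 k2 x1 x2 h1 (TLU.of_treeLike tl1) a1
    h2 (TLU.of_treeLike tl2) a2

end
end CFDPaper
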